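/- Let ε > 0, k ∈ ℕ, r_max ≥ 0, and 0 ≤ r ≤ r_max. Let Z = ScalarDP(r, ε; k, r_max). Then E[Z] = r and E[(Z − r)²] ≤ ((k+1)/(e^ε − 1))·[r² + r_max²/(4k²) + (2k+1)(e^ε + k) r_max²/(6k(e^ε − 1))] + r_max²/(4k²). -/

import Mathlib

open MeasureTheory Real Classical
open scoped ENNReal

/-- The distribution of the output `Z` of the mechanism `ScalarDP(r, ε; k, r_max)`:
randomized rounding of `k·min{r,r_max}/r_max` to `J ∈ {⌊·⌋, ⌈·⌉}`, `(k+1)`-ary randomized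
response `Ĵ`, and the debiased output `Z = a(Ĵ - b)` with
`a = ((e^ε+k)/(e^ε-1))·(r_max/k)` and `b = k(k+1)/(2(e^ε+k))`. -/
noncomputable def scalarDP (r ε : ℝ) (k : ℕ) (rmax : ℝ) : Measure ℝ :=
  let r' := min r rmax
  let c := k * r' / rmax
  let μJ : Measure ℝ :=
    ENNReal.ofReal ((⌈c⌉ : ℝ) - c) • Measure.dirac ((⌊c⌋ : ℤ) : ℝ)
      + ENNReal.ofReal (1 - ((⌈c⌉ : ℝ) - c)) • Measure.dirac ((⌈c⌉ : ℤ) : ℝ)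
  let rr : ℝ → Measure ℝ := fun i =>
    ENNReal.ofReal (Real.exp ε / (Real.exp ε + k)) • Measure.dirac i
      + ENNReal.ofReal (1 / (Real.exp ε + k)) •
          ∑ j ∈ Finset.range (k + 1),
            (if (j : ℝ) = i then 0 else Measure.dirac ((j : ℕ) : ℝ))
  let a := (Real.exp ε + k) / (Real.exp ε - 1) * (rmax / k)
  let b := k * (k + 1) / (2 * (Real.exp ε + k))
  μJ.bind fun i => (rr i).map fun x => a * (x - b)

lemma sum_cast_range (k : ℕ) : ∑ j ∈ Finset.range (k+1), (j:ℝ) = k*(k+1)/2 := by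
  induction k with
  | zero => simp
  | succ n ih => rw [Finset.sum_range_succ, ih]; push_cast; ring

lemma sum_cast_sq_range (k : ℕ) : ∑ j ∈ Finset.range (k+1), (j:ℝ)^2 = k*(k+1)*(2*k+1)/6 := by
  induction k with
  | zero => simp
  | succ n ih => rw [Finset.sum_range_succ, ih]; push_cast; ring



lemma sum_ite_ne {n : ℕ} (G : ℕ → ℝ) {m : ℕ} (hm : m ∈ Finset.range n) :
    ∑ j ∈ Finset.range n, (if (j:ℝ) = (m:ℝ) then 0 else G j)
      = (∑ j ∈ Finset.range n, G j) - G m := by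
  have h : ∀ j ∈ Finset.range n,
      (if (j:ℝ) = (m:ℝ) then 0 else G j) = G j - (if j = m then G j else 0) := by
    intro j _
    by_cases h : j = m
    · subst h; simp
    · simp [h, fun hh => h (Nat.cast_inj.mp hh)]
  rw [Finset.sum_congr rfl h, Finset.sum_sub_distrib, Finset.sum_ite_eq' (Finset.range n) m G,
    if_pos hm]

lemma integrable_dirac_cont {g : ℝ → ℝ} (hg : Continuous g) (x : ℝ) :
    Integrable g (Measure.dirac x) := by
  refine ⟨hg.aestronglyMeasurable, ?_⟩
  simp [HasFiniteIntegral, lintegral_dirac]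

lemma bind_two_diracs (c₁ c₂ : ℝ≥0∞) (x y : ℝ) (F : ℝ → Measure ℝ) (hF : Measurable F) :
    (c₁ • Measure.dirac x + c₂ • Measure.dirac y).bind F = c₁ • F x + c₂ • F y := by
  ext s hs
  rw [Measure.bind_apply hs hF.aemeasurable, lintegral_add_measure, lintegral_smul_measure,
    lintegral_smul_measure,
    lintegral_dirac' x (f := fun a => F a s) ((Measure.measurable_coe hs).comp hF),
    lintegral_dirac' y (f := fun a => F a s) ((Measure.measurable_coe hs).comp hF)]
  simp [Measure.add_apply, Measure.smul_apply]

lemma integral_mech (ε a b c : ℝ) (k : ℕ) (hc0 : 0 ≤ c) (hck : c ≤ k)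
    (g : ℝ → ℝ) (hg : Continuous g) :
    (∫ x, g x ∂((ENNReal.ofReal ((⌈c⌉ : ℝ) - c) • Measure.dirac ((⌊c⌋ : ℤ) : ℝ)
        + ENNReal.ofReal (1 - ((⌈c⌉ : ℝ) - c)) • Measure.dirac ((⌈c⌉ : ℤ) : ℝ)).bind
        (fun i => ((ENNReal.ofReal (Real.exp ε / (Real.exp ε + k)) • Measure.dirac i
          + ENNReal.ofReal (1 / (Real.exp ε + k)) •
              ∑ j ∈ Finset.range (k + 1),
                (if (j : ℝ) = i then 0 else Measure.dirac ((j : ℕ) : ℝ))).map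
          fun x => a * (x - b))))) =
      (Real.exp ε - 1) / (Real.exp ε + k) *
          (((⌈c⌉ : ℝ) - c) * g (a * (((⌊c⌋ : ℤ) : ℝ) - b))
            + (1 - ((⌈c⌉ : ℝ) - c)) * g (a * (((⌈c⌉ : ℤ) : ℝ) - b)))
        + 1 / (Real.exp ε + k) * (∑ j ∈ Finset.range (k + 1), g (a * ((j : ℝ) - b))) := by
  have hD : (0:ℝ) < Real.exp ε + k := by positivity
  have hh : Continuous (fun x : ℝ => a * (x - b)) := by continuity
  have hgh : Continuous (fun x : ℝ => g (a * (x - b))) := hg.comp hh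
  have hrr : Measurable (fun i : ℝ =>
      ENNReal.ofReal (Real.exp ε / (Real.exp ε + k)) • Measure.dirac i
        + ENNReal.ofReal (1 / (Real.exp ε + k)) •
            ∑ j ∈ Finset.range (k + 1),
              (if (j : ℝ) = i then 0 else Measure.dirac ((j : ℕ) : ℝ))) := by
    apply Measure.measurable_of_measurable_coe
    intro s hs
    simp only [Measure.add_apply, Measure.smul_apply, smul_eq_mul,
      Measure.finset_sum_apply, apply_ite (fun μ : Measure ℝ => μ s),
      Measure.coe_zero, Pi.zero_apply]
    apply Measurable.add
    · exact measurable_const.mul ((Measure.measurable_coe hs).comp Measure.measurable_dirac)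
    · refine measurable_const.mul (Finset.measurable_sum _ fun j _ => ?_)
      refine Measurable.ite ?_ measurable_const measurable_const
      have h2 : {i : ℝ | (j:ℝ) = i} = {(j:ℝ)} := by ext t; simp [eq_comm]
      rw [h2]; exact measurableSet_singleton _
  have hF : Measurable (fun i : ℝ =>
      (ENNReal.ofReal (Real.exp ε / (Real.exp ε + k)) • Measure.dirac i
        + ENNReal.ofReal (1 / (Real.exp ε + k)) •
            ∑ j ∈ Finset.range (k + 1),
              (if (j : ℝ) = i then 0 else Measure.dirac ((j : ℕ) : ℝ))).map
        fun x => a * (x - b)) :=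
    (Measure.measurable_map _ hh.measurable).comp hrr
  have hintsum : ∀ i : ℝ, Integrable (fun x => g (a * (x - b)))
      (∑ j ∈ Finset.range (k + 1),
        (if (j : ℝ) = i then 0 else Measure.dirac ((j : ℕ) : ℝ))) := by
    intro i
    refine integrable_finset_sum_measure.2 fun j _ => ?_
    split_ifs
    · exact integrable_zero_measure
    · exact integrable_dirac_cont hgh _
  have hint : ∀ i : ℝ, Integrable g
      ((ENNReal.ofReal (Real.exp ε / (Real.exp ε + k)) • Measure.dirac i
        + ENNReal.ofReal (1 / (Real.exp ε + k)) •
            ∑ j ∈ Finset.range (k + 1),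
              (if (j : ℝ) = i then 0 else Measure.dirac ((j : ℕ) : ℝ))).map
        fun x => a * (x - b)) := by
    intro i
    rw [integrable_map_measure hg.aestronglyMeasurable hh.measurable.aemeasurable]
    apply Integrable.add_measure
    · exact ((integrable_dirac_cont hgh i).smul_measure ENNReal.ofReal_ne_top :)
    · exact ((hintsum i).smul_measure ENNReal.ofReal_ne_top :)
  have hFi : ∀ i : ℝ, (∫ x, g x
      ∂((ENNReal.ofReal (Real.exp ε / (Real.exp ε + k)) • Measure.dirac i
        + ENNReal.ofReal (1 / (Real.exp ε + k)) •
            ∑ j ∈ Finset.range (k + 1),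
              (if (j : ℝ) = i then 0 else Measure.dirac ((j : ℕ) : ℝ))).map
        fun x => a * (x - b))) =
      Real.exp ε / (Real.exp ε + k) * g (a * (i - b))
        + 1 / (Real.exp ε + k) * ∑ j ∈ Finset.range (k + 1),
            (if (j : ℝ) = i then 0 else g (a * ((j : ℝ) - b))) := by
    intro i
    rw [integral_map hh.measurable.aemeasurable hg.aestronglyMeasurable]
    rw [integral_add_measure
      ((integrable_dirac_cont hgh i).smul_measure ENNReal.ofReal_ne_top :)
      ((hintsum i).smul_measure ENNReal.ofReal_ne_top :),
      integral_smul_measure, integral_smul_measure,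
      ENNReal.toReal_ofReal (by positivity), ENNReal.toReal_ofReal (by positivity),
      integral_dirac,
      integral_finset_sum_measure (fun j _ => by
        split_ifs
        · exact integrable_zero_measure
        · exact integrable_dirac_cont hgh _)]
    have hterm : ∀ j ∈ Finset.range (k+1),
        (∫ x, g (a * (x - b)) ∂(if (j:ℝ) = i then 0 else Measure.dirac ((j:ℕ):ℝ)))
          = (if (j:ℝ) = i then 0 else g (a * ((j:ℝ) - b))) := by
      intro j _
      split_ifs with hij
      · simp
      · rw [integral_dirac]
    rw [Finset.sum_congr rfl hterm]
    simp [smul_eq_mul]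
  rw [bind_two_diracs _ _ _ _ _ hF]
  have hp0 : (0:ℝ) ≤ (⌈c⌉ : ℝ) - c := by
    have := Int.le_ceil c; linarith
  have hp1 : (0:ℝ) ≤ 1 - ((⌈c⌉ : ℝ) - c) := by
    have := Int.ceil_lt_add_one c; linarith
  rw [integral_add_measure ((hint _).smul_measure ENNReal.ofReal_ne_top)
      ((hint _).smul_measure ENNReal.ofReal_ne_top),
    integral_smul_measure, integral_smul_measure,
    ENNReal.toReal_ofReal hp0, ENNReal.toReal_ofReal hp1, hFi, hFi]
  obtain ⟨n₀, hn₀⟩ : ∃ n : ℕ, (n : ℤ) = ⌊c⌋ :=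
    ⟨⌊c⌋.toNat, Int.toNat_of_nonneg (Int.floor_nonneg.mpr hc0)⟩
  obtain ⟨n₁, hn₁⟩ : ∃ n : ℕ, (n : ℤ) = ⌈c⌉ :=
    ⟨⌈c⌉.toNat, Int.toNat_of_nonneg (Int.ceil_nonneg hc0)⟩
  have hn₀r : ((n₀ : ℕ) : ℝ) = ((⌊c⌋ : ℤ) : ℝ) := by rw [← hn₀]; push_cast; ring
  have hn₁r : ((n₁ : ℕ) : ℝ) = ((⌈c⌉ : ℤ) : ℝ) := by rw [← hn₁]; push_cast; ring
  have hm₀ : n₀ ∈ Finset.range (k+1) := by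
    rw [Finset.mem_range]
    have h1 : (⌊c⌋ : ℤ) ≤ k := by
      have h2 : (⌊c⌋:ℝ) ≤ (k:ℝ) := le_trans (Int.floor_le c) hck
      exact_mod_cast h2
    omega
  have hm₁ : n₁ ∈ Finset.range (k+1) := by
    rw [Finset.mem_range]
    have h1 : (⌈c⌉ : ℤ) ≤ k := Int.ceil_le.mpr (by exact_mod_cast hck)
    omega
  rw [← hn₀r, ← hn₁r,
    sum_ite_ne (fun j => g (a * ((j:ℝ) - b))) hm₀,
    sum_ite_ne (fun j => g (a * ((j:ℝ) - b))) hm₁]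
  have hDne : (Real.exp ε + (k:ℝ)) ≠ 0 := ne_of_gt hD
  simp only [smul_eq_mul]
  field_simp
  ring

set_option maxHeartbeats 1000000 in
lemma heq_aux (β kk rm c V r a b : ℝ) (hA : β - 1 ≠ 0) (hD : β + kk ≠ 0) (hk : kk ≠ 0)
    (ha : a = (β + kk) / (β - 1) * (rm / kk))
    (hb : b = kk * (kk + 1) / (2 * (β + kk)))
    (hrc : r = rm * c / kk) :
    ((kk+1)/(β - 1) * (r^2 + rm^2/(4*kk^2) + (2*kk+1)*(β + kk)*rm^2/(6*kk*(β - 1)))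
          + rm^2/(4*kk^2))
        - ((β - 1) / (β + kk) * (a^2*(c^2+V) - 2*a*(a*b+r)*c + (a*b+r)^2)
            + 1/(β + kk) * (a^2*(kk*(kk+1)*(2*kk+1)/6)
                  - 2*a*(a*b+r)*(kk*(kk+1)/2) + (kk+1)*(a*b+r)^2))
        = ((kk+1)/(β - 1) + 1) * (rm^2/kk^2) * (1/4 - V)
          + (rm^2/kk^2) * (kk*(kk+1)/2) * (kk*(kk+1)/2 + 2*(β - 1)*c) / (β - 1)^2 := by
  subst ha hb hrc
  field_simp
  ring

set_option maxHeartbeats 2000000 in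
/-- `ScalarDP` is unbiased, `E[Z] = r`, with the stated mean-squared-error
bound. -/
theorem scalarDP_mean_and_mse (ε : ℝ) (hε : 0 < ε) (k : ℕ) (hk : 0 < k)
    (rmax r : ℝ) (hr0 : 0 ≤ r) (hr : r ≤ rmax) :
    (∫ x, x ∂(scalarDP r ε k rmax)) = r ∧
      (∫ x, (x - r) ^ 2 ∂(scalarDP r ε k rmax))
        ≤ ((k : ℝ) + 1) / (Real.exp ε - 1)
            * (r ^ 2 + rmax ^ 2 / (4 * (k : ℝ) ^ 2)
                + (2 * (k : ℝ) + 1) * (Real.exp ε + k) * rmax ^ 2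
                    / (6 * (k : ℝ) * (Real.exp ε - 1)))
          + rmax ^ 2 / (4 * (k : ℝ) ^ 2) := by
  have hrm0 : (0:ℝ) ≤ rmax := hr0.trans hr
  have hβ1 : 1 < Real.exp ε := by
    calc (1:ℝ) = Real.exp 0 := Real.exp_zero.symm
    _ < Real.exp ε := Real.exp_lt_exp.mpr hε
  have hA : (0:ℝ) < Real.exp ε - 1 := by linarith
  have hD : (0:ℝ) < Real.exp ε + k := by positivity
  have hkR : (0:ℝ) < (k:ℝ) := by exact_mod_cast hk
  set c : ℝ := (k:ℝ) * min r rmax / rmax with hc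
  have hmin : min r rmax = r := min_eq_left hr
  have hc0 : 0 ≤ c := by rw [hc, hmin]; positivity
  have hck : c ≤ (k:ℝ) := by
    rw [hc, hmin]
    rcases eq_or_lt_of_le hrm0 with h0 | h0
    · rw [← h0, div_zero]; exact hkR.le
    · rw [div_le_iff₀ h0]
      nlinarith
  have hrc : r = rmax * c / (k:ℝ) := by
    rcases eq_or_lt_of_le hrm0 with h0 | h0
    · rw [← h0] at hr ⊢
      have : r = 0 := le_antisymm hr hr0
      rw [this]; ring
    · rw [hc, hmin]; field_simp
  set a : ℝ := (Real.exp ε + k) / (Real.exp ε - 1) * (rmax / k) with ha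
  set b : ℝ := (k:ℝ) * ((k:ℝ) + 1) / (2 * (Real.exp ε + k)) with hb
  set fl : ℝ := ((⌊c⌋ : ℤ) : ℝ) with hfl
  set ce : ℝ := ((⌈c⌉ : ℤ) : ℝ) with hce
  have hfl_le : fl ≤ c := Int.floor_le c
  have hce_ge : c ≤ ce := Int.le_ceil c
  have hcase : ce = fl ∨ ce = fl + 1 := by
    have h1 : ⌊c⌋ ≤ ⌈c⌉ := Int.floor_le_ceil c
    have h2 : ⌈c⌉ ≤ ⌊c⌋ + 1 := Int.ceil_le_floor_add_one c
    have h3 : ⌈c⌉ = ⌊c⌋ ∨ ⌈c⌉ = ⌊c⌋ + 1 := by omega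
    rcases h3 with h | h
    · left; rw [hce, hfl, h]
    · right; rw [hce, hfl, h]; push_cast; ring
  have hmean : (ce - c) * fl + (1 - (ce - c)) * ce = c := by
    rcases hcase with h | h
    · have hcec : ce = c := le_antisymm (by rw [h]; exact hfl_le) hce_ge
      rw [hcec]; ring
    · rw [h]; ring
  set V : ℝ := (ce - c) * fl^2 + (1 - (ce - c)) * ce^2 - c^2 with hV
  have hM2 : (ce - c) * fl^2 + (1 - (ce - c)) * ce^2 = c^2 + V := by rw [hV]; ring
  have hV0 : 0 ≤ V := by
    rcases hcase with h | h
    · have hcec : ce = c := le_antisymm (by rw [h]; exact hfl_le) hce_ge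
      have hflc : fl = c := by rw [← h, hcec]
      rw [hV, hcec, hflc]; ring_nf; exact le_refl 0
    · have hx1 : c - fl ≤ 1 := by rw [h] at hce_ge; linarith
      have hVx : V = (c - fl) - (c - fl)^2 := by rw [hV, h]; ring
      nlinarith [hfl_le, hx1]
  have hV4 : V ≤ 1/4 := by
    rcases hcase with h | h
    · have hcec : ce = c := le_antisymm (by rw [h]; exact hfl_le) hce_ge
      have hflc : fl = c := by rw [← h, hcec]
      rw [hV, hcec, hflc]; nlinarith
    · have hVx : V = (c - fl) - (c - fl)^2 := by rw [hV, h]; ring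
      nlinarith [sq_nonneg (2*(c - fl) - 1)]
  -- the two integral formulas
  have E1 : (∫ x, x ∂(scalarDP r ε k rmax)) =
      (Real.exp ε - 1) / (Real.exp ε + k) *
          ((ce - c) * (a * (fl - b)) + (1 - (ce - c)) * (a * (ce - b)))
        + 1 / (Real.exp ε + k) * (∑ j ∈ Finset.range (k + 1), (a * ((j : ℝ) - b))) :=
    integral_mech ε a b c k hc0 hck (fun x => x) continuous_id'
  have E2 : (∫ x, (x - r)^2 ∂(scalarDP r ε k rmax)) =
      (Real.exp ε - 1) / (Real.exp ε + k) *
          ((ce - c) * (a * (fl - b) - r)^2 + (1 - (ce - c)) * (a * (ce - b) - r)^2)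
        + 1 / (Real.exp ε + k) *
            (∑ j ∈ Finset.range (k + 1), (a * ((j : ℝ) - b) - r)^2) :=
    integral_mech ε a b c k hc0 hck (fun x => (x - r)^2) ((continuous_id.sub continuous_const).pow 2)
  have hsum1 : (∑ j ∈ Finset.range (k+1), (a * ((j:ℝ) - b)))
      = a * ((k:ℝ)*((k:ℝ)+1)/2) - ((k:ℝ)+1) * (a*b) := by
    simp only [mul_sub]
    rw [Finset.sum_sub_distrib, ← Finset.mul_sum, sum_cast_range, Finset.sum_const,
      Finset.card_range]
    push_cast; ring
  have hsum2 : (∑ j ∈ Finset.range (k+1), (a * ((j:ℝ) - b) - r)^2)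
      = a^2 * ((k:ℝ)*((k:ℝ)+1)*(2*(k:ℝ)+1)/6) - (2*a*(a*b+r)) * ((k:ℝ)*((k:ℝ)+1)/2)
        + ((k:ℝ)+1)*(a*b+r)^2 := by
    have hterm : ∀ j ∈ Finset.range (k+1),
        (a * ((j:ℝ) - b) - r)^2
          = a^2 * (j:ℝ)^2 - (2*a*(a*b+r)) * (j:ℝ) + (a*b+r)^2 := fun j _ => by ring
    rw [Finset.sum_congr rfl hterm]
    rw [Finset.sum_add_distrib, Finset.sum_sub_distrib, ← Finset.mul_sum, ← Finset.mul_sum,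
      sum_cast_range, sum_cast_sq_range, Finset.sum_const, Finset.card_range]
    push_cast; ring
  have key1 : (ce - c) * (a * (fl - b)) + (1 - (ce - c)) * (a * (ce - b)) = a * (c - b) := by
    linear_combination a * hmean
  have key2 : (ce - c) * (a * (fl - b) - r)^2 + (1 - (ce - c)) * (a * (ce - b) - r)^2
      = a^2*(c^2+V) - 2*a*(a*b+r)*c + (a*b+r)^2 := by
    linear_combination a^2 * hM2 + (-2*a*(a*b+r)) * hmean
  constructor
  · rw [E1, key1, hsum1, ha, hb, hrc]
    field_simp
    ring
  · rw [E2, key2, hsum2]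
    have h9 : (0:ℝ) ≤ ((k:ℝ)+1)/(Real.exp ε - 1) + 1 := by
      have := div_nonneg (show (0:ℝ) ≤ (k:ℝ)+1 by positivity) hA.le
      linarith
    have hT1 : (0:ℝ) ≤ (((k:ℝ)+1)/(Real.exp ε - 1) + 1) * (rmax^2/(k:ℝ)^2) * (1/4 - V) :=
      mul_nonneg (mul_nonneg h9 (by positivity)) (by linarith)
    have h10 : (0:ℝ) ≤ (k:ℝ)*((k:ℝ)+1)/2 + 2*(Real.exp ε - 1)*c :=
      add_nonneg (by positivity) (mul_nonneg (by linarith) hc0)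
    have hT2 : (0:ℝ) ≤ (rmax^2/(k:ℝ)^2) * ((k:ℝ)*((k:ℝ)+1)/2)
        * ((k:ℝ)*((k:ℝ)+1)/2 + 2*(Real.exp ε - 1)*c) / (Real.exp ε - 1)^2 :=
      div_nonneg (mul_nonneg (mul_nonneg (by positivity) (by positivity)) h10) (by positivity)
    have heq : (((k:ℝ)+1)/(Real.exp ε - 1)
            * (r^2 + rmax^2/(4*(k:ℝ)^2)
                + (2*(k:ℝ)+1)*(Real.exp ε + (k:ℝ))*rmax^2/(6*(k:ℝ)*(Real.exp ε - 1)))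
          + rmax^2/(4*(k:ℝ)^2))
        - ((Real.exp ε - 1) / (Real.exp ε + (k:ℝ))
              * (a^2*(c^2+V) - 2*a*(a*b+r)*c + (a*b+r)^2)
            + 1/(Real.exp ε + (k:ℝ))
              * (a^2*((k:ℝ)*((k:ℝ)+1)*(2*(k:ℝ)+1)/6)
                  - 2*a*(a*b+r)*((k:ℝ)*((k:ℝ)+1)/2) + ((k:ℝ)+1)*(a*b+r)^2))
        = (((k:ℝ)+1)/(Real.exp ε - 1) + 1) * (rmax^2/(k:ℝ)^2) * (1/4 - V)
          + (rmax^2/(k:ℝ)^2) * ((k:ℝ)*((k:ℝ)+1)/2)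
              * ((k:ℝ)*((k:ℝ)+1)/2 + 2*(Real.exp ε - 1)*c) / (Real.exp ε - 1)^2 := by
      exact heq_aux (Real.exp ε) ((k:ℝ)) rmax c V r a b (ne_of_gt hA) (ne_of_gt hD)
        (ne_of_gt hkR) ha hb hrc
    linarith [heq, hT1, hT2]
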